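/- The fourth-order extrapolation of the Strang splitting, Φ(h) = (4/3)·S(h/2)² − (1/3)·S(h) where S(h) = e^{(h/2)A}·e^{hB}·e^{(h/2)A}, satisfies Φ(h) = e^{h(A+B)} + O(h⁵) for square matrices A and B. -/

import Mathlib

open NormedSpace Finset Nat
set_option linter.unusedSectionVars false

noncomputable def strangS (n : ℕ)
    (A B : EuclideanSpace ℂ (Fin n) →L[ℂ] EuclideanSpace ℂ (Fin n)) (h : ℂ) :
    EuclideanSpace ℂ (Fin n) →L[ℂ] EuclideanSpace ℂ (Fin n) :=
  NormedSpace.exp ((h / 2) • A) * NormedSpace.exp (h • B)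
    * NormedSpace.exp ((h / 2) • A)

section Ser
variable {𝔸 : Type*} [NormedRing 𝔸] [NormedAlgebra ℂ 𝔸] [CompleteSpace 𝔸] [NormOneClass 𝔸]

noncomputable def coef (X : 𝔸) (k : ℕ) : 𝔸 := ((k ! : ℂ))⁻¹ • X ^ k

noncomputable def conv (c d : ℕ → 𝔸) (n : ℕ) : 𝔸 :=
  ∑ p ∈ Finset.HasAntidiagonal.antidiagonal n, c p.1 * d p.2

def SerBnd (c : ℕ → 𝔸) (M : ℝ) : Prop := ∀ k, ‖c k‖ ≤ M ^ k / k !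

lemma serBnd_coef (X : 𝔸) : SerBnd (coef X) ‖X‖ := by
  intro k
  rw [coef, norm_smul, norm_inv, Complex.norm_natCast, div_eq_inv_mul]
  gcongr
  exact norm_pow_le X k

lemma sum_antidiag_pow (M M' : ℝ) (n : ℕ) :
    ∑ p ∈ Finset.HasAntidiagonal.antidiagonal n, M ^ p.1 * M' ^ p.2 / (p.1 ! * p.2 !) =
      (M + M') ^ n / n ! := by
  rw [(Commute.all M M').add_pow' n, Finset.sum_div]
  refine Finset.sum_congr rfl fun p hp => ?_
  have hn : p.1 + p.2 = n := Finset.HasAntidiagonal.mem_antidiagonal.mp hp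
  have : ((n.choose p.1 : ℝ)) = n ! / (p.1 ! * p.2 !) := by
    rw [← hn, Nat.cast_add_choose]
  rw [nsmul_eq_mul, this]
  have h1 : (0:ℝ) < p.1 ! := by positivity
  have h2 : (0:ℝ) < p.2 ! := by positivity
  have h3 : (0:ℝ) < n ! := by positivity
  field_simp

lemma SerBnd.conv {c d : ℕ → 𝔸} {M M' : ℝ} (hM : 0 ≤ M) (hM' : 0 ≤ M')
    (hc : SerBnd c M) (hd : SerBnd d M') : SerBnd (_root_.conv c d) (M + M') := by
  intro n
  rw [_root_.conv, ← sum_antidiag_pow]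
  refine (norm_sum_le _ _).trans (Finset.sum_le_sum fun p _ => ?_)
  calc ‖c p.1 * d p.2‖ ≤ ‖c p.1‖ * ‖d p.2‖ := norm_mul_le _ _
    _ ≤ (M ^ p.1 / p.1 !) * (M' ^ p.2 / p.2 !) :=
        mul_le_mul (hc p.1) (hd p.2) (norm_nonneg _) (by positivity)
    _ = M ^ p.1 * M' ^ p.2 / (p.1 ! * p.2 !) := by ring

lemma SerBnd.summable_norm {c : ℕ → 𝔸} {M : ℝ} (hc : SerBnd c M) (h : ℂ) :
    Summable fun k => ‖h ^ k • c k‖ := by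
  refine Summable.of_nonneg_of_le (fun k => norm_nonneg _) (fun k => ?_)
    (Real.summable_pow_div_factorial (‖h‖ * M))
  rw [norm_smul, norm_pow, mul_pow, mul_div_assoc]
  exact mul_le_mul_of_nonneg_left (hc k) (by positivity)

lemma SerBnd.summable {c : ℕ → 𝔸} {M : ℝ} (hc : SerBnd c M) (h : ℂ) :
    Summable fun k => h ^ k • c k :=
  (hc.summable_norm h).of_norm

lemma tsum_mul_tsum_conv {c d : ℕ → 𝔸} {M M' : ℝ}
    (hc : SerBnd c M) (hd : SerBnd d M') (h : ℂ) :
    (∑' k, h ^ k • c k) * (∑' k, h ^ k • d k) = ∑' n, h ^ n • _root_.conv c d n := by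
  rw [tsum_mul_tsum_eq_tsum_sum_antidiagonal_of_summable_norm
    (hc.summable_norm h) (hd.summable_norm h)]
  refine tsum_congr fun n => ?_
  rw [_root_.conv, Finset.smul_sum]
  refine Finset.sum_congr rfl fun p hp => ?_
  have hn : p.1 + p.2 = n := Finset.HasAntidiagonal.mem_antidiagonal.mp hp
  rw [smul_mul_smul_comm, ← pow_add, hn]

lemma exp_smul_eq_tsum (X : 𝔸) (h : ℂ) :
    NormedSpace.exp (h • X) = ∑' k, h ^ k • coef X k := by
  simp only [NormedSpace.exp_eq_tsum ℂ]
  refine tsum_congr fun k => ?_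
  rw [coef, smul_pow, smul_comm, smul_smul]

end Ser
section Main
variable {𝔸 : Type*} [NormedRing 𝔸] [NormedAlgebra ℂ 𝔸] [CompleteSpace 𝔸] [NormOneClass 𝔸]
variable (A B : 𝔸)

noncomputable def sCo : ℕ → 𝔸 :=
  conv (conv (coef ((2:ℂ)⁻¹ • A)) (coef B)) (coef ((2:ℂ)⁻¹ • A))
noncomputable def sH : ℕ → 𝔸 := fun k => ((2:ℂ)⁻¹) ^ k • sCo A B k
noncomputable def eCo : ℕ → 𝔸 := fun n =>
  (4/3 : ℂ) • conv (sH A B) (sH A B) n - (1/3 : ℂ) • sCo A B n - coef (A + B) n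

lemma SerBnd.mono {c : ℕ → 𝔸} {M M' : ℝ} (hM : 0 ≤ M) (hle : M ≤ M')
    (hc : SerBnd c M) : SerBnd c M' := fun k => (hc k).trans <| by
  gcongr

lemma serBnd_cA : SerBnd (coef ((2:ℂ)⁻¹ • A)) (‖A‖ / 2) := by
  have := serBnd_coef ((2:ℂ)⁻¹ • A)
  rwa [norm_smul, norm_inv, Complex.norm_ofNat, inv_mul_eq_div] at this

lemma serBnd_s : SerBnd (sCo A B) (‖A‖ + ‖B‖) := by
  have h1 := ((serBnd_cA A).conv (by positivity) (norm_nonneg B) (serBnd_coef B)).conv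
    (by positivity) (by positivity) (serBnd_cA A)
  exact h1.mono (by positivity) (le_of_eq (by ring))

lemma serBnd_sH : SerBnd (sH A B) ((‖A‖ + ‖B‖) / 2) := by
  intro k
  show ‖((2:ℂ)⁻¹) ^ k • sCo A B k‖ ≤ _
  rw [norm_smul, norm_pow, norm_inv, Complex.norm_ofNat]
  calc (2:ℝ)⁻¹ ^ k * ‖sCo A B k‖ ≤ 2⁻¹ ^ k * ((‖A‖ + ‖B‖) ^ k / k !) := by
        have h2 : (0:ℝ) ≤ 2⁻¹ ^ k := by positivity
        exact mul_le_mul_of_nonneg_left (serBnd_s A B k) h2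
    _ = ((‖A‖ + ‖B‖) / 2) ^ k / k ! := by rw [div_pow, inv_pow]; ring

lemma serBnd_conv_sH : SerBnd (conv (sH A B) (sH A B)) (‖A‖ + ‖B‖) :=
  ((serBnd_sH A B).conv (by positivity) (by positivity) (serBnd_sH A B)).mono
    (by positivity) (le_of_eq (by ring))

lemma norm_e_le (n : ℕ) : ‖eCo A B n‖ ≤ 3 * ((‖A‖ + ‖B‖) ^ n / n !) := by
  have hAB : ‖A + B‖ ^ n ≤ (‖A‖ + ‖B‖) ^ n :=
    pow_le_pow_left₀ (norm_nonneg _) (norm_add_le A B) n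
  have h43 : ‖(4/3 : ℂ)‖ = 4/3 := by
    rw [norm_div, Complex.norm_ofNat, Complex.norm_ofNat]
  have h13 : ‖(1/3 : ℂ)‖ = 1/3 := by
    rw [norm_div, norm_one, Complex.norm_ofNat]
  calc ‖eCo A B n‖ ≤ ‖(4/3 : ℂ) • conv (sH A B) (sH A B) n - (1/3 : ℂ) • sCo A B n‖
        + ‖coef (A + B) n‖ := norm_sub_le _ _
    _ ≤ ‖(4/3 : ℂ) • conv (sH A B) (sH A B) n‖ + ‖(1/3 : ℂ) • sCo A B n‖
        + ‖coef (A + B) n‖ := add_le_add_left (norm_sub_le _ _) _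
    _ ≤ (4/3) * ((‖A‖ + ‖B‖) ^ n / n !) + (1/3) * ((‖A‖ + ‖B‖) ^ n / n !)
        + (‖A‖ + ‖B‖) ^ n / n ! := by
        gcongr ?_ + ?_ + ?_
        · rw [norm_smul, h43]
          exact mul_le_mul_of_nonneg_left (serBnd_conv_sH A B n) (by norm_num)
        · rw [norm_smul, h13]
          exact mul_le_mul_of_nonneg_left (serBnd_s A B n) (by norm_num)
        · exact (serBnd_coef (A + B) n).trans ((div_le_div_iff_of_pos_right (by positivity)).mpr hAB)
    _ ≤ 3 * ((‖A‖ + ‖B‖) ^ n / n !) := by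
        have : (0:ℝ) ≤ (‖A‖ + ‖B‖) ^ n / n ! := by positivity
        nlinarith

lemma rep_S (h : ℂ) :
    NormedSpace.exp ((h / 2) • A) * NormedSpace.exp (h • B)
      * NormedSpace.exp ((h / 2) • A) = ∑' k, h ^ k • sCo A B k := by
  have hh : (h / 2) • A = h • ((2:ℂ)⁻¹ • A) := by rw [smul_smul]; ring_nf
  rw [hh, exp_smul_eq_tsum, exp_smul_eq_tsum B,
    tsum_mul_tsum_conv (serBnd_cA A) (serBnd_coef B),
    tsum_mul_tsum_conv ((serBnd_cA A).conv (by positivity) (norm_nonneg B)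
      (serBnd_coef B)) (serBnd_cA A)]
  rfl

lemma rep_S_half (h : ℂ) :
    NormedSpace.exp ((h / 2 / 2) • A) * NormedSpace.exp ((h / 2) • B)
      * NormedSpace.exp ((h / 2 / 2) • A) = ∑' k, h ^ k • sH A B k := by
  rw [rep_S A B (h / 2)]
  refine tsum_congr fun k => ?_
  rw [sH, smul_smul]
  congr 1
  rw [div_pow]
  rw [inv_pow, div_eq_mul_inv]

lemma rep_diff (h : ℂ) :
    (4/3 : ℂ) • ((∑' k, h ^ k • sH A B k) * (∑' k, h ^ k • sH A B k))
      - (1/3 : ℂ) • (∑' k, h ^ k • sCo A B k)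
      - NormedSpace.exp (h • (A + B)) = ∑' n, h ^ n • eCo A B n := by
  rw [tsum_mul_tsum_conv (serBnd_sH A B) (serBnd_sH A B), exp_smul_eq_tsum,
    ← Summable.tsum_const_smul ((4/3 : ℂ)) ((serBnd_conv_sH A B).summable h),
    ← Summable.tsum_const_smul ((1/3 : ℂ)) ((serBnd_s A B).summable h),
    ← Summable.tsum_sub (((serBnd_conv_sH A B).summable h).const_smul _)
      (((serBnd_s A B).summable h).const_smul _),
    ← Summable.tsum_sub ((((serBnd_conv_sH A B).summable h).const_smul _).sub
      (((serBnd_s A B).summable h).const_smul _)) ((serBnd_coef (A + B)).summable h)]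
  refine tsum_congr fun n => ?_
  rw [eCo]
  rw [smul_comm ((4/3:ℂ)) (h ^ n), smul_comm ((1/3:ℂ)) (h ^ n), ← smul_sub, ← smul_sub]

end Main
section Z
variable {𝔸 : Type*} [NormedRing 𝔸] [NormedAlgebra ℂ 𝔸] [CompleteSpace 𝔸] [NormOneClass 𝔸]
variable (A B : 𝔸)

set_option maxHeartbeats 8000000 in
lemma eCo_zero' : ∀ m < 5, eCo A B m = 0 := by
  intro m hm
  interval_cases m
  · simp only [eCo, conv, sCo, sH, coef, Finset.Nat.sum_antidiagonal_eq_sum_range_succ_mk,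
      Finset.sum_range_succ, Finset.sum_range_zero]
    norm_num [Nat.factorial, smul_pow, pow_succ, smul_mul_assoc, mul_smul_comm, smul_smul,
      mul_add, add_mul, smul_add, mul_assoc]
    module
  · simp only [eCo, conv, sCo, sH, coef, Finset.Nat.sum_antidiagonal_eq_sum_range_succ_mk,
      Finset.sum_range_succ, Finset.sum_range_zero]
    norm_num [Nat.factorial, smul_pow, pow_succ, smul_mul_assoc, mul_smul_comm, smul_smul,
      mul_add, add_mul, smul_add, mul_assoc]
    module
  · simp only [eCo, conv, sCo, sH, coef, Finset.Nat.sum_antidiagonal_eq_sum_range_succ_mk,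
      Finset.sum_range_succ, Finset.sum_range_zero]
    norm_num [Nat.factorial, smul_pow, pow_succ, smul_mul_assoc, mul_smul_comm, smul_smul,
      mul_add, add_mul, smul_add, mul_assoc]
    module
  · simp only [eCo, conv, sCo, sH, coef, Finset.Nat.sum_antidiagonal_eq_sum_range_succ_mk,
      Finset.sum_range_succ, Finset.sum_range_zero]
    norm_num [Nat.factorial, smul_pow, pow_succ, smul_mul_assoc, mul_smul_comm, smul_smul,
      mul_add, add_mul, smul_add, mul_assoc]
    module
  · simp only [eCo, conv, sCo, sH, coef, Finset.Nat.sum_antidiagonal_eq_sum_range_succ_mk,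
      Finset.sum_range_succ, Finset.sum_range_zero]
    norm_num [Nat.factorial, smul_pow, pow_succ, smul_mul_assoc, mul_smul_comm, smul_smul,
      mul_add, add_mul, smul_add, mul_assoc]
    module
end Z
section Tail
variable {𝔸 : Type*} [NormedRing 𝔸] [NormedAlgebra ℂ 𝔸] [CompleteSpace 𝔸] [NormOneClass 𝔸]
variable (A B : 𝔸)

lemma eCo_zero : ∀ m < 5, eCo A B m = 0 := eCo_zero' A B

lemma summable_bound : Summable (fun k : ℕ => (‖A‖ + ‖B‖) ^ k / k !) :=
  Real.summable_pow_div_factorial _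

lemma tail_bound (h : ℂ) (hh : ‖h‖ ≤ 1) :
    ‖∑' k, h ^ k • eCo A B k‖ ≤ (3 * ∑' k : ℕ, (‖A‖ + ‖B‖) ^ k / k !) * ‖h‖ ^ 5 := by
  set M := ‖A‖ + ‖B‖ with hM
  have key : ∀ k : ℕ, ‖h ^ k • eCo A B k‖ ≤ ‖h‖ ^ 5 * (3 * (M ^ k / k !)) := by
    intro k
    rcases lt_or_ge k 5 with hk | hk
    · rw [eCo_zero A B k hk, smul_zero, norm_zero]
      positivity
    · rw [norm_smul, norm_pow]
      have h1 : ‖h‖ ^ k ≤ ‖h‖ ^ 5 := pow_le_pow_of_le_one (norm_nonneg h) hh hk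
      exact mul_le_mul h1 (norm_e_le A B k) (norm_nonneg _) (by positivity)
  have hsum : Summable fun k : ℕ => ‖h‖ ^ 5 * (3 * (M ^ k / k !)) :=
    ((summable_bound A B).mul_left 3).mul_left _
  have hsum2 : Summable fun k : ℕ => ‖h ^ k • eCo A B k‖ :=
    Summable.of_nonneg_of_le (fun k => norm_nonneg _) key hsum
  have s1 : ‖∑' k, h ^ k • eCo A B k‖ ≤ ∑' k, ‖h ^ k • eCo A B k‖ :=
    norm_tsum_le_tsum_norm hsum2
  have s2 : ∑' k, ‖h ^ k • eCo A B k‖ ≤ ∑' k : ℕ, ‖h‖ ^ 5 * (3 * (M ^ k / k !)) :=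
    Summable.tsum_le_tsum key hsum2 hsum
  have s3 : ∑' k : ℕ, ‖h‖ ^ 5 * (3 * (M ^ k / k !))
      = (3 * ∑' k : ℕ, M ^ k / k !) * ‖h‖ ^ 5 := by
    rw [tsum_mul_left, tsum_mul_left]
    ring
  rw [← s3]
  exact s1.trans s2

lemma main_generic (A B : 𝔸) : ∃ C > 0, ∃ δ > 0, ∀ h : ℝ, |h| < δ →
    ‖(4 / 3 : ℂ) • ((NormedSpace.exp (((h : ℂ) / 2 / 2) • A) * NormedSpace.exp (((h : ℂ) / 2) • B)
          * NormedSpace.exp (((h : ℂ) / 2 / 2) • A)) *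
        (NormedSpace.exp (((h : ℂ) / 2 / 2) • A) * NormedSpace.exp (((h : ℂ) / 2) • B)
          * NormedSpace.exp (((h : ℂ) / 2 / 2) • A)))
      - (1 / 3 : ℂ) • (NormedSpace.exp (((h : ℂ) / 2) • A) * NormedSpace.exp ((h : ℂ) • B)
          * NormedSpace.exp (((h : ℂ) / 2) • A))
      - NormedSpace.exp ((h : ℂ) • (A + B))‖ ≤ C * |h| ^ 5 := by
  refine ⟨3 * ∑' k : ℕ, (‖A‖ + ‖B‖) ^ k / k ! + 1, ?_, 1, one_pos, fun h hh => ?_⟩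
  · have h0 : (0:ℝ) ≤ ∑' k : ℕ, (‖A‖ + ‖B‖) ^ k / k ! :=
      tsum_nonneg fun k => by positivity
    linarith
  · rw [rep_S_half A B (h : ℂ), rep_S A B (h : ℂ), rep_diff A B (h : ℂ)]
    have hnorm : ‖(h : ℂ)‖ = |h| := Complex.norm_real h
    have hb := tail_bound A B (h : ℂ) (by rw [hnorm]; exact le_of_lt hh)
    rw [hnorm] at hb
    refine hb.trans ?_
    have h5 : (0:ℝ) ≤ |h| ^ 5 := by positivity
    nlinarith
end Tail
theorem stmt_4 (n : ℕ)
    (A B : EuclideanSpace ℂ (Fin n) →L[ℂ] EuclideanSpace ℂ (Fin n)) :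
    ∃ C > 0, ∃ δ > 0, ∀ h : ℝ, |h| < δ →
      ‖(4 / 3 : ℂ) • (strangS n A B ((h : ℂ) / 2) * strangS n A B ((h : ℂ) / 2))
        - (1 / 3 : ℂ) • strangS n A B (h : ℂ)
        - NormedSpace.exp ((h : ℂ) • (A + B))‖ ≤ C * |h| ^ 5 := by
  rcases subsingleton_or_nontrivial (EuclideanSpace ℂ (Fin n)) with hs | hnt
  · refine ⟨1, one_pos, 1, one_pos, fun h _ => ?_⟩
    haveI : Subsingleton (EuclideanSpace ℂ (Fin n) →L[ℂ] EuclideanSpace ℂ (Fin n)) :=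
      inferInstance
    rw [Subsingleton.elim ((4 / 3 : ℂ) • (strangS n A B ((h : ℂ) / 2) * strangS n A B ((h : ℂ) / 2))
        - (1 / 3 : ℂ) • strangS n A B (h : ℂ)
        - NormedSpace.exp ((h : ℂ) • (A + B))) 0, norm_zero]
    positivity
  · simp only [strangS]
    exact main_generic A B
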